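/- Let (c₁,B₁),…,(cₘ,Bₘ) be a Brascamp–Lieb datum on ℝⁿ with Σᵢ cᵢ nᵢ = n and with ⋂ᵢ ker(Bᵢ) = {0}. Suppose C is a finite constant such that ∫_{ℝⁿ} ∏ᵢ (fᵢ(Bᵢx))^{cᵢ} dx ≤ C ∏ᵢ (∫_{ℝ^{nᵢ}} fᵢ dx)^{cᵢ} for all nonnegative integrable fᵢ. Then for every collection of positive definite matrices Aᵢ on ℝ^{nᵢ}, ∏ᵢ det(Aᵢ)^{cᵢ} ≤ C² det(Σᵢ cᵢ Bᵢ* Aᵢ Bᵢ). -/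

import Mathlib

open MeasureTheory Matrix
open Real

lemma sum_mulVec' {ι m n : Type*} [Fintype n] (s : Finset ι) (M : ι → Matrix m n ℝ) (x : n → ℝ) :
    (∑ i ∈ s, M i) *ᵥ x = ∑ i ∈ s, (M i) *ᵥ x := by
  induction s using Finset.cons_induction with
  | empty => simp [Matrix.zero_mulVec]
  | cons a s ha ih => simp [Finset.sum_cons, Matrix.add_mulVec, ih]

lemma dotProduct_sum' {ι n : Type*} [Fintype n] (s : Finset ι) (v : n → ℝ) (w : ι → n → ℝ) :
    v ⬝ᵥ (∑ i ∈ s, w i) = ∑ i ∈ s, v ⬝ᵥ w i := by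
  induction s using Finset.cons_induction with
  | empty => simp
  | cons a s ha ih => simp [Finset.sum_cons, dotProduct_add, ih]

lemma quad_eq {n : ℕ} (m : ℕ) (ni : Fin m → ℕ) (c : Fin m → ℝ)
    (B : ∀ i, Matrix (Fin (ni i)) (Fin n) ℝ) (A : ∀ i, Matrix (Fin (ni i)) (Fin (ni i)) ℝ)
    (x : Fin n → ℝ) :
    x ⬝ᵥ (∑ i, c i • ((B i)ᵀ * A i * B i)) *ᵥ x
      = ∑ i, c i * ((B i) *ᵥ x ⬝ᵥ (A i) *ᵥ ((B i) *ᵥ x)) := by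
  rw [sum_mulVec', dotProduct_sum']
  refine Finset.sum_congr rfl fun i _ => ?_
  rw [Matrix.smul_mulVec, dotProduct_smul, smul_eq_mul]
  congr 1
  rw [← Matrix.mulVec_mulVec, ← Matrix.mulVec_mulVec, Matrix.dotProduct_mulVec x ((B i)ᵀ),
    Matrix.vecMul_transpose]

lemma gauss_base_integrable (k : ℕ) :
    Integrable fun x : Fin k → ℝ => Real.exp (-(x ⬝ᵥ x) / 2) := by
  have h : ∀ x : Fin k → ℝ, Real.exp (-(x ⬝ᵥ x) / 2) = ∏ i, Real.exp (-(1/2 : ℝ) * (x i) ^ 2) := by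
    intro x
    rw [← Real.exp_sum]
    congr 1
    simp only [dotProduct, neg_div, ← Finset.sum_div, ← Finset.sum_neg_distrib]
    rw [Finset.sum_div]
    refine Finset.sum_congr rfl fun i _ => ?_
    ring
  simp only [h]
  exact Integrable.fintype_prod fun i => integrable_exp_neg_mul_sq (by norm_num)

lemma gauss_base (k : ℕ) :
    ∫ x : Fin k → ℝ, Real.exp (-(x ⬝ᵥ x) / 2) = (2 * π) ^ ((k : ℝ) / 2) := by
  have h : ∀ x : Fin k → ℝ, Real.exp (-(x ⬝ᵥ x) / 2) = ∏ i, Real.exp (-(1/2 : ℝ) * (x i) ^ 2) := by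
    intro x
    rw [← Real.exp_sum]
    congr 1
    rw [dotProduct, neg_div, Finset.sum_div, ← Finset.sum_neg_distrib]
    refine Finset.sum_congr rfl fun i _ => ?_
    ring
  simp only [h]
  rw [MeasureTheory.volume_pi, MeasureTheory.integral_fintype_prod_eq_pow (fun t : ℝ => Real.exp (-(1/2:ℝ) * t ^ 2)),
    integral_gaussian]
  have h2 : π / (1/2 : ℝ) = 2 * π := by ring
  rw [h2, Fintype.card_fin]
  rw [← Real.rpow_natCast (√(2 * π)) k, Real.sqrt_eq_rpow, ← Real.rpow_mul (by positivity)]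
  congr 1
  ring

lemma gauss_matrix {k : ℕ} {Q : Matrix (Fin k) (Fin k) ℝ} (hQ : Q.PosDef) :
    (Integrable fun x : Fin k → ℝ => Real.exp (-(x ⬝ᵥ Q *ᵥ x) / 2)) ∧
    ∫ x : Fin k → ℝ, Real.exp (-(x ⬝ᵥ Q *ᵥ x) / 2)
      = (2 * π) ^ ((k : ℝ) / 2) / Real.sqrt Q.det := by
  open scoped MatrixOrder in
  set S := CFC.sqrt Q with hSdef
  open scoped MatrixOrder in
  have hSS : S * S = Q := CFC.sqrt_mul_sqrt_self Q hQ.posSemidef.nonneg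
  have hSsym : Sᵀ = S := by
    open scoped MatrixOrder in
    have := (CFC.sqrt_nonneg Q).posSemidef.1
    rw [Matrix.IsHermitian, Matrix.conjTranspose_eq_transpose_of_trivial] at this
    exact this
  have hdetsq : S.det * S.det = Q.det := by rw [← Matrix.det_mul, hSS]
  have hQdet : 0 < Q.det := hQ.det_pos
  have habs : |S.det| = Real.sqrt Q.det := by
    rw [← Real.sqrt_sq_eq_abs, sq, hdetsq]
  have hdet0 : S.det ≠ 0 := by
    intro h
    rw [h, mul_zero] at hdetsq
    exact hQdet.ne hdetsq
  -- quadratic form identity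
  have hquad : ∀ x : Fin k → ℝ, x ⬝ᵥ Q *ᵥ x = (S *ᵥ x) ⬝ᵥ (S *ᵥ x) := by
    intro x
    rw [← hSS, ← Matrix.mulVec_mulVec, Matrix.dotProduct_mulVec x S, ← hSsym,
      Matrix.vecMul_transpose, hSsym]
  -- change of variables
  set f : (Fin k → ℝ) →ₗ[ℝ] (Fin k → ℝ) := Matrix.toLin' S with hf
  have hfdet : LinearMap.det f = S.det := LinearMap.det_toLin' S
  have hfdet0 : LinearMap.det f ≠ 0 := by rw [hfdet]; exact hdet0
  have hmap : Measure.map (⇑f) volume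
      = ENNReal.ofReal |(LinearMap.det f)⁻¹| • volume :=
    Measure.map_linearMap_addHaar_pi_eq_smul_addHaar hfdet0 volume
  have hfc : Continuous f := f.continuous_of_finiteDimensional
  set g : (Fin k → ℝ) → ℝ := fun y => Real.exp (-(y ⬝ᵥ y) / 2) with hg
  have hgc : Continuous g := by
    apply Real.continuous_exp.comp
    simp only [dotProduct]
    fun_prop
  have hfapp : ∀ x, f x = S *ᵥ x := fun x => Matrix.toLin'_apply S x
  have hcomp : (fun x : Fin k → ℝ => Real.exp (-(x ⬝ᵥ Q *ᵥ x) / 2)) = g ∘ f := by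
    funext x
    simp [hg, hquad x, hfapp x, Function.comp]
  have hgint : Integrable g := gauss_base_integrable k
  have hgmap : Integrable g (Measure.map (⇑f) volume) := by
    rw [hmap]
    exact hgint.smul_measure ENNReal.ofReal_ne_top
  have hint : Integrable (g ∘ f) := by
    exact (integrable_map_measure hgc.aestronglyMeasurable hfc.aemeasurable).mp hgmap
  constructor
  · rw [hcomp]; exact hint
  · rw [hcomp]
    have h1 : ∫ x, (g ∘ f) x = ∫ y, g y ∂(Measure.map (⇑f) volume) :=
      (integral_map hfc.aemeasurable hgc.aestronglyMeasurable).symm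
    rw [h1, hmap, integral_smul_measure, ENNReal.toReal_ofReal (abs_nonneg _), hfdet]
    rw [gauss_base k, smul_eq_mul, abs_inv, habs]
    rw [inv_mul_eq_div]

lemma Q_posdef {m n : ℕ} (ni : Fin m → ℕ) (c : Fin m → ℝ) (hc : ∀ i, 0 < c i)
    (B : ∀ i, Matrix (Fin (ni i)) (Fin n) ℝ)
    (hker : ∀ x : Fin n → ℝ, (∀ i, (B i) *ᵥ x = 0) → x = 0)
    (Ai : ∀ i, Matrix (Fin (ni i)) (Fin (ni i)) ℝ) (hAi : ∀ i, (Ai i).PosDef) :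
    (∑ i, c i • ((B i)ᵀ * Ai i * B i)).PosDef := by
  refine Matrix.PosDef.of_dotProduct_mulVec_pos ?_ ?_
  · -- Hermitian
    unfold Matrix.IsHermitian
    rw [Matrix.conjTranspose_eq_transpose_of_trivial, Matrix.transpose_sum]
    refine Finset.sum_congr rfl fun i _ => ?_
    rw [Matrix.transpose_smul, Matrix.transpose_mul, Matrix.transpose_mul,
      Matrix.transpose_transpose]
    have hA : (Ai i)ᵀ = Ai i := by
      have := (hAi i).1.eq
      rwa [Matrix.conjTranspose_eq_transpose_of_trivial] at this
    rw [hA, Matrix.mul_assoc]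
  · intro x hx
    have key := quad_eq m ni c B Ai x
    simp only [RCLike.re_to_real, star_trivial]
    rw [key]
    obtain ⟨j, hj⟩ : ∃ j, (B j) *ᵥ x ≠ 0 := by
      by_contra h
      push_neg at h
      exact hx (hker x h)
    refine Finset.sum_pos' (fun i _ => ?_) ⟨j, Finset.mem_univ j, ?_⟩
    · rcases eq_or_ne ((B i) *ᵥ x) 0 with h | h
      · simp [h]
      · have := (hAi i).dotProduct_mulVec_pos h
        simp only [RCLike.re_to_real, star_trivial] at this
        exact (mul_pos (hc i) this).le
    · have := (hAi j).dotProduct_mulVec_pos hj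
      simp only [RCLike.re_to_real, star_trivial] at this
      exact mul_pos (hc j) this

/-- **The Gaussian Brascamp–Lieb constant is at most the Brascamp–Lieb constant**
(inequality (9) of the paper). Applying the Brascamp–Lieb inequality to centered
Gaussian functions `fᵢ(x) = exp(−⟨Aᵢx,x⟩/2)` yields
`∏ det(Aᵢ)^{cᵢ} ≤ C² det(∑ cᵢ Bᵢ* Aᵢ Bᵢ)` for all positive definite `Aᵢ`. -/
theorem gaussian_brascamp_lieb_of_brascamp_lieb
    (m n : ℕ) (ni : Fin m → ℕ) (c : Fin m → ℝ) (hc : ∀ i, 0 < c i)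
    (B : ∀ i, Matrix (Fin (ni i)) (Fin n) ℝ)
    (hB : ∀ i, Function.Surjective (B i).mulVec)
    (hdim : ∑ i, c i * (ni i : ℝ) = (n : ℝ))
    (hker : ∀ x : Fin n → ℝ, (∀ i, (B i).mulVec x = 0) → x = 0)
    (C : ℝ)
    (hC : ∀ f : ∀ i, (Fin (ni i) → ℝ) → ℝ,
      (∀ i x, 0 ≤ f i x) → (∀ i, Integrable (f i)) →
      ∫ x : Fin n → ℝ, ∏ i, (f i ((B i).mulVec x)) ^ (c i) ≤
        C * ∏ i, (∫ y : Fin (ni i) → ℝ, f i y) ^ (c i))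
    (Ai : ∀ i, Matrix (Fin (ni i)) (Fin (ni i)) ℝ) (hAi : ∀ i, (Ai i).PosDef) :
    ∏ i, (Ai i).det ^ (c i) ≤ C ^ 2 * (∑ i, c i • ((B i)ᵀ * Ai i * B i)).det := by
  classical
  set Q := ∑ i, c i • ((B i)ᵀ * Ai i * B i) with hQdef
  have hQ : Q.PosDef := Q_posdef ni c hc B hker Ai hAi
  have hQdetpos : 0 < Q.det := hQ.det_pos
  set f : ∀ i, (Fin (ni i) → ℝ) → ℝ :=
    fun i y => Real.exp (-(y ⬝ᵥ (Ai i) *ᵥ y) / 2) with hfdef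
  have hpos : ∀ i x, 0 ≤ f i x := fun i x => (Real.exp_pos _).le
  have hint : ∀ i, Integrable (f i) := fun i => (gauss_matrix (hAi i)).1
  have hval : ∀ i, ∫ y, f i y = (2*π) ^ ((ni i : ℝ)/2) / Real.sqrt (Ai i).det :=
    fun i => (gauss_matrix (hAi i)).2
  have hpt : ∀ x : Fin n → ℝ,
      ∏ i, (f i ((B i) *ᵥ x)) ^ (c i) = Real.exp (-(x ⬝ᵥ Q *ᵥ x) / 2) := by
    intro x
    have h1 : ∀ i, (f i ((B i) *ᵥ x)) ^ (c i)
        = Real.exp (c i * (-(((B i) *ᵥ x) ⬝ᵥ (Ai i) *ᵥ ((B i) *ᵥ x)) / 2)) := by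
      intro i
      rw [hfdef]
      rw [Real.rpow_def_of_pos (Real.exp_pos _), Real.log_exp, mul_comm]
    simp only [h1]
    rw [← Real.exp_sum]
    congr 1
    rw [hQdef, quad_eq m ni c B Ai x, ← Finset.sum_neg_distrib, Finset.sum_div]
    exact Finset.sum_congr rfl fun i _ => by ring
  have hmain := hC f hpos hint
  have hlhs : ∫ x : Fin n → ℝ, ∏ i, (f i ((B i).mulVec x)) ^ (c i)
      = (2*π) ^ ((n : ℝ)/2) / Real.sqrt Q.det := by
    rw [show (fun x : Fin n → ℝ => ∏ i, (f i ((B i).mulVec x)) ^ (c i))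
        = fun x => Real.exp (-(x ⬝ᵥ Q *ᵥ x) / 2) from funext hpt]
    exact (gauss_matrix hQ).2
  set P := (2*π) ^ ((n : ℝ)/2) with hPdef
  have hP : 0 < P := Real.rpow_pos_of_pos (by positivity) _
  set K := ∏ i, (Real.sqrt (Ai i).det) ^ (c i) with hKdef
  have hK : 0 < K := Finset.prod_pos fun i _ =>
    Real.rpow_pos_of_pos (Real.sqrt_pos.mpr (hAi i).det_pos) _
  have hrhs : ∏ i, (∫ y : Fin (ni i) → ℝ, f i y) ^ (c i) = P / K := by
    have h2 : ∀ i, (∫ y : Fin (ni i) → ℝ, f i y) ^ (c i)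
        = (2*π) ^ ((ni i : ℝ)/2 * c i) / (Real.sqrt (Ai i).det) ^ (c i) := by
      intro i
      rw [hval i, Real.div_rpow (by positivity) (Real.sqrt_nonneg _),
        ← Real.rpow_mul (by positivity)]
    simp only [h2]
    rw [Finset.prod_div_distrib]
    congr 1
    have h3 : ∀ i, (2*π : ℝ) ^ ((ni i : ℝ)/2 * c i)
        = Real.exp (Real.log (2*π) * ((ni i : ℝ)/2 * c i)) := fun i =>
      Real.rpow_def_of_pos (by positivity) _
    simp only [h3]
    rw [← Real.exp_sum, hPdef, Real.rpow_def_of_pos (by positivity)]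
    congr 1
    rw [← Finset.mul_sum]
    congr 1
    rw [← hdim, Finset.sum_div]
    refine Finset.sum_congr rfl fun i _ => ?_
    ring
  rw [hlhs, hrhs] at hmain
  have hD : 0 < Real.sqrt Q.det := Real.sqrt_pos.mpr hQdetpos
  rw [mul_div_assoc'] at hmain
  rw [div_le_div_iff₀ hD hK] at hmain
  -- hmain : P * K ≤ C * P * √Q.det
  have h4' : P * K ≤ P * (C * Real.sqrt Q.det) := by
    rw [show P * (C * Real.sqrt Q.det) = C * P * Real.sqrt Q.det from by ring]
    exact hmain
  have h4 : K ≤ C * Real.sqrt Q.det := le_of_mul_le_mul_left h4' hP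
  have h5 : K * K ≤ (C * Real.sqrt Q.det) * (C * Real.sqrt Q.det) :=
    mul_self_le_mul_self hK.le h4
  have h6 : (C * Real.sqrt Q.det) * (C * Real.sqrt Q.det) = C ^ 2 * Q.det := by
    rw [show (C * Real.sqrt Q.det) * (C * Real.sqrt Q.det)
        = C ^ 2 * (Real.sqrt Q.det * Real.sqrt Q.det) by ring,
      Real.mul_self_sqrt hQdetpos.le]
  have h7 : K * K = ∏ i, (Ai i).det ^ (c i) := by
    rw [hKdef, ← Finset.prod_mul_distrib]
    refine Finset.prod_congr rfl fun i _ => ?_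
    rw [← Real.rpow_add (Real.sqrt_pos.mpr (hAi i).det_pos), Real.sqrt_eq_rpow,
      ← Real.rpow_mul (hAi i).det_pos.le]
    congr 1
    ring
  rw [← h7]
  exact h6 ▸ h5
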